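/- A connected irreducible graph with clique number 2 is CIS if and only if it is isomorphic to K₂. -/
import Mathlib


open SimpleGraph

variable {V : Type*}

/-- A set of vertices is stable (independent) if no two of its vertices are adjacent. -/
def SimpleGraph.IsStableSet (G : SimpleGraph V) (s : Set V) : Prop :=
  s.Pairwise fun u v => ¬ G.Adj u v

/-- A graph is CIS if every maximal clique and every maximal stable set intersect. -/
def SimpleGraph.IsCIS (G : SimpleGraph V) : Prop :=
  ∀ C S : Set V, Maximal G.IsClique C → Maximal G.IsStableSet S → (C ∩ S).Nonempty

/-- A graph is irreducible if no two distinct vertices have the same open neighborhood. -/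
def SimpleGraph.Irreducible (G : SimpleGraph V) : Prop :=
  ∀ u v : V, G.neighborSet u = G.neighborSet v → u = v

/-- Every stable set extends to a maximal stable set. -/
lemma exists_maximal_stable (G : SimpleGraph V) (s : Set V) (hs : G.IsStableSet s) :
    ∃ M, s ⊆ M ∧ Maximal G.IsStableSet M := by
  have := zorn_subset_nonempty {t : Set V | G.IsStableSet t} (fun c hc hchain hne => by
    refine ⟨⋃₀ c, ?_, fun t ht => Set.subset_sUnion_of_mem ht⟩
    intro x hx y hy hxy
    obtain ⟨tx, htx, hxtx⟩ := hx
    obtain ⟨ty, hty, hyty⟩ := hy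
    rcases hchain.total htx hty with h | h
    · exact hc hty (h hxtx) hyty hxy
    · exact hc htx hxtx (h hyty) hxy) s hs
  obtain ⟨M, hM1, hM2⟩ := this
  exact ⟨M, hM1, hM2⟩

theorem connected_irreducible_cliqueNum_two_cis_iff (G : SimpleGraph V) [Fintype V]
    (hconn : G.Connected) (hirr : G.Irreducible) (hω : G.cliqueNum = 2) :
    G.IsCIS ↔ Nonempty (G ≃g (⊤ : SimpleGraph (Fin 2))) := by
  classical
  -- triangle-free
  have htf : ∀ x y z : V, G.Adj x y → G.Adj x z → G.Adj y z → False := by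
    intro x y z hxy hxz hyz
    have hcl : G.IsClique ({x, y, z} : Finset V) := by
      intro a ha b hb hab
      simp only [Finset.coe_insert, Set.mem_insert_iff, Finset.coe_singleton,
        Set.mem_singleton_iff] at ha hb
      rcases ha with rfl | rfl | rfl <;> rcases hb with rfl | rfl | rfl <;>
        first | exact absurd rfl hab | assumption | exact hxy.symm | exact hxz.symm | exact hyz.symm
    have hc := hcl.card_le_cliqueNum
    rw [hω] at hc
    have : ({x, y, z} : Finset V).card = 3 := by
      rw [Finset.card_insert_of_notMem, Finset.card_insert_of_notMem, Finset.card_singleton]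
      · simp only [Finset.mem_singleton]; exact fun h => (h ▸ hyz).ne rfl
      · simp only [Finset.mem_insert, Finset.mem_singleton]
        push_neg
        exact ⟨hxy.ne, hxz.ne⟩
    omega
  -- an edge is a maximal clique
  have hedge_max : ∀ u v : V, G.Adj u v → Maximal G.IsClique ({u, v} : Set V) := by
    intro u v huv
    constructor
    · intro a ha b hb hab
      rcases ha with rfl | ha <;> rcases hb with rfl | hb
      · exact absurd rfl hab
      · exact hb ▸ huv
      · exact ha ▸ huv.symm
      · exact absurd (ha.trans hb.symm) hab
    · intro t ht hsub x hx
      by_contra hmem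
      simp only [Set.mem_insert_iff, Set.mem_singleton_iff] at hmem
      push_neg at hmem
      have hxu : G.Adj x u := ht hx (hsub (by simp)) hmem.1
      have hxv : G.Adj x v := ht hx (hsub (by simp)) hmem.2
      exact htf x u v hxu hxv huv
  constructor
  · intro hcis
    -- key: common neighbors force equality
    have hdeg : ∀ w u v : V, G.Adj w u → G.Adj w v → u = v := by
      intro w u v hwu hwv
      by_contra hne
      have huv : ¬ G.Adj u v := fun h => htf w u v hwu hwv h
      -- helper: x adjacent to u but not v gives contradiction
      have helper : ∀ u' v' x : V, G.Adj w u' → G.Adj w v' → ¬ G.Adj u' v' →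
          G.Adj u' x → ¬ G.Adj v' x → False := by
        intro u' v' x hwu' hwv' hu'v' hu'x hv'x
        have hvx : v' ≠ x := fun h => hu'v' (h ▸ hu'x)
        have hst : G.IsStableSet ({v', x} : Set V) := by
          intro a ha b hb hab
          rcases ha with rfl | ha <;> rcases hb with rfl | hb
          · exact absurd rfl hab
          · exact hb ▸ hv'x
          · exact ha ▸ fun h => hv'x h.symm
          · exact absurd (ha.trans hb.symm) hab
        obtain ⟨M, hsubM, hM⟩ := exists_maximal_stable G _ hst
        obtain ⟨y, hyC, hyM⟩ := hcis _ M (hedge_max u' w hwu'.symm) hM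
        rcases hyC with rfl | hy
        · -- y = u' ∈ M, but x ∈ M and u' adj x
          exact hM.1 hyM (hsubM (by simp)) hu'x.ne hu'x
        · -- y = w ∈ M, but v' ∈ M and w adj v'
          rw [Set.mem_singleton_iff] at hy
          subst hy
          exact hM.1 hyM (hsubM (by simp)) hwv'.ne hwv'
      have hNne : G.neighborSet u ≠ G.neighborSet v := fun h => hne (hirr u v h)
      have : ∃ x, (x ∈ G.neighborSet u ∧ x ∉ G.neighborSet v) ∨
          (x ∈ G.neighborSet v ∧ x ∉ G.neighborSet u) := by
        by_contra h
        push_neg at h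
        apply hNne
        ext x
        have := h x
        tauto
      obtain ⟨x, hx | hx⟩ := this
      · exact helper u v x hwu hwv huv hx.1 hx.2
      · exact helper v u x hwv hwu (fun h => huv h.symm) hx.1 hx.2
    -- get an edge
    obtain ⟨s, hs⟩ := G.exists_isNClique_cliqueNum
    rw [hω] at hs
    obtain ⟨a, b, hab, rfl⟩ := Finset.card_eq_two.mp hs.card_eq
    have hadj : G.Adj a b := hs.isClique (by simp) (by simp) hab
    -- every vertex is a or b
    have hall : ∀ v : V, v = a ∨ v = b := by
      have key : ∀ {x y : V}, G.Walk x y → x = a ∨ x = b → y = a ∨ y = b := by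
        intro x y w
        induction w with
        | nil => exact id
        | cons h p ih =>
          intro hx
          apply ih
          rcases hx with rfl | rfl
          · exact Or.inr (hdeg _ b _ hadj h).symm
          · exact Or.inl (hdeg _ a _ hadj.symm h).symm
      intro v
      obtain ⟨w⟩ := hconn.preconnected a v
      exact key w (Or.inl rfl)
    -- adjacency iff distinct
    have hadj_iff : ∀ u v : V, G.Adj u v ↔ u ≠ v := by
      intro u v
      constructor
      · exact Adj.ne
      · intro h
        rcases hall u with rfl | rfl <;> rcases hall v with rfl | rfl
        · exact absurd rfl h
        · exact hadj
        · exact hadj.symm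
        · exact absurd rfl h
    refine ⟨⟨⟨fun v => if v = a then 0 else 1, fun i => if i = 0 then a else b, ?_, ?_⟩, ?_⟩⟩
    · intro v
      rcases hall v with rfl | rfl
      · simp
      · simp [hab.symm]
    · intro i
      fin_cases i <;> simp [hab, Ne.symm hab]
    · intro u v
      simp only [Equiv.coe_fn_mk, top_adj, hadj_iff]
      rcases hall u with rfl | rfl <;> rcases hall v with rfl | rfl <;>
        simp [hab, hab.symm, Fin.ext_iff]
  · rintro ⟨e⟩
    set a := e.symm 0 with ha
    set b := e.symm 1 with hb
    have hab : a ≠ b := fun h => by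
      have : (0 : Fin 2) = 1 := e.symm.injective h
      simp at this
    have hall : ∀ v : V, v = a ∨ v = b := by
      intro v
      have : e v = 0 ∨ e v = 1 := by omega
      rcases this with h | h
      · left; rw [ha, ← h, RelIso.symm_apply_apply]
      · right; rw [hb, ← h, RelIso.symm_apply_apply]
    have hadj_iff : ∀ u v : V, G.Adj u v ↔ u ≠ v := by
      intro u v
      rw [← e.map_rel_iff, top_adj]
      exact not_congr ⟨fun h => e.injective h, fun h => h ▸ rfl⟩
    have hadj : G.Adj a b := (hadj_iff a b).mpr hab
    intro C S hC hS
    -- C = {a, b}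
    have hCab : a ∈ C ∧ b ∈ C := by
      have hclab : G.IsClique ({a, b} : Set V) := by
        intro x hx y hy hxy
        exact (hadj_iff x y).mpr hxy
      have hCsub : C ⊆ ({a, b} : Set V) := fun x _ => by
        rcases hall x with rfl | rfl <;> simp
      have := hC.2 hclab hCsub
      exact ⟨this (by simp), this (by simp)⟩
    -- S nonempty
    have hSne : S.Nonempty := by
      by_contra h
      rw [Set.not_nonempty_iff_eq_empty] at h
      subst h
      have hsta : G.IsStableSet ({a} : Set V) := Set.pairwise_singleton _ _
      have := hS.2 hsta (Set.empty_subset _)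
      exact (this (Set.mem_singleton a)).elim
    obtain ⟨x, hx⟩ := hSne
    refine ⟨x, ?_, hx⟩
    rcases hall x with rfl | rfl
    · exact hCab.1
    · exact hCab.2
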